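/- Let q > 1 be odd and squarefree and let w be any integer. Then H(w; q) = Σ_{q₁ q₂ = q} μ(q₁) χ_{q₁}(−1) H*(q̄₁ w; q₂), where the sum runs over all factorizations of q into positive integers q₁ q₂ = q, q̄₁ denotes an integer with q̄₁ q₁ ≡ 1 (mod q₂), μ is the Möbius function, and by convention H*(·; 1) = 1 and χ_1(−1) = 1. -/

import Mathlib

/-- `e_c(x) = exp(2πix/c)`. -/
noncomputable def ec (c : ℕ) (x : ℤ) : ℂ :=
  Complex.exp (2 * Real.pi * Complex.I * x / c)

/-- The Kloosterman sum `S(m, n; c) = Σ_{a d ≡ 1 (mod c)} e_c(a m + d n)`. -/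
noncomputable def kloos (m n : ℤ) (c : ℕ) : ℂ :=
  ∑ a ∈ Finset.range c, ∑ d ∈ Finset.range c,
    if (a * d) % c = 1 % c then ec c (a * m + d * n) else 0

/-- `G(m, m₁, m₂; c)` : complete sum of Kloosterman sums twisted by `χ_q`, for `q ∣ c`. -/
noncomputable def Gsum (q : ℕ) (m m1 m2 : ℤ) (c : ℕ) : ℂ :=
  ∑ a ∈ Finset.range c, ∑ a1 ∈ Finset.range c, ∑ a2 ∈ Finset.range c,
    (jacobiSym ((a : ℤ) * a1 * a2) q : ℂ) * kloos a ((a1 : ℤ) * a2) c *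
      ec c (a * m + a1 * m1 + a2 * m2)

/-- `G'(m, m₁, m₂; c) = e_c(−m m₁ m₂) G(m, m₁, m₂; c)`. -/
noncomputable def Gsum' (q : ℕ) (m m1 m2 : ℤ) (c : ℕ) : ℂ :=
  ec c (-(m * m1 * m2)) * Gsum q m m1 m2 c

/-- `H_r(m, m₁, m₂; q) = Σ_{u,v mod q} χ_q(v (u + v m₁)(v r − m)(u r + m m₁)) e_q(u m₂)`. -/
noncomputable def Hr (r m m1 m2 : ℤ) (q : ℕ) : ℂ :=
  ∑ u ∈ Finset.range q, ∑ v ∈ Finset.range q,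
    (jacobiSym ((v : ℤ) * ((u : ℤ) + v * m1) * ((v : ℤ) * r - m) * ((u : ℤ) * r + m * m1)) q : ℂ) *
      ec q (u * m2)

/-- `H(w; q) = Σ_{u,v mod q} χ_q(u v (u+1)(v+1)) e_q((u v − 1) w)`. -/
noncomputable def Hw (w : ℤ) (q : ℕ) : ℂ :=
  ∑ u ∈ Finset.range q, ∑ v ∈ Finset.range q,
    (jacobiSym ((u : ℤ) * v * ((u : ℤ) + 1) * ((v : ℤ) + 1)) q : ℂ) *
      ec q (((u : ℤ) * v - 1) * w)

/-- Reduced sum `H*(w; q)`, restricted by `gcd(uv − 1, q) = 1`. -/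
noncomputable def Hstar (w : ℤ) (q : ℕ) : ℂ :=
  ∑ u ∈ Finset.range q, ∑ v ∈ Finset.range q,
    if Int.gcd ((u : ℤ) * v - 1) q = 1 then
      (jacobiSym ((u : ℤ) * v * ((u : ℤ) + 1) * ((v : ℤ) + 1)) q : ℂ) *
        ec q (((u : ℤ) * v - 1) * w)
    else 0

/-- The Ramanujan sum `R(n; k) = Σ_{d mod k, (d,k)=1} e_k(d n)`. -/
noncomputable def Ram (n : ℤ) (k : ℕ) : ℂ :=
  ∑ d ∈ Finset.range k, if Nat.gcd d k = 1 then ec k (d * n) else 0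

/-- The Gauss sum `τ(χ_q) = Σ_{x mod q} χ_q(x) e_q(x)`. -/
noncomputable def gaussτ (q : ℕ) : ℂ :=
  ∑ x ∈ Finset.range q, (jacobiSym (x : ℤ) q : ℂ) * ec q (x : ℤ)


open Finset

lemma ec_add (q : ℕ) (a b : ℤ) : ec q (a + b) = ec q a * ec q b := by
  simp only [ec, Int.cast_add, ← Complex.exp_add]
  congr 1
  ring

lemma ec_int_mul (q : ℕ) (k : ℤ) : ec q (q * k) = 1 := by
  rcases Nat.eq_zero_or_pos q with h | h
  · subst h; simp [ec]
  · have hq : (q : ℂ) ≠ 0 := by exact_mod_cast h.ne'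
    have : 2 * (Real.pi : ℂ) * Complex.I * ((q : ℤ) * k : ℤ) / q = k * (2 * Real.pi * Complex.I) := by
      push_cast
      field_simp
    rw [ec, this, Complex.exp_int_mul_two_pi_mul_I]

lemma ec_congr {q : ℕ} {a b : ℤ} (h : a ≡ b [ZMOD (q : ℤ)]) : ec q a = ec q b := by
  obtain ⟨k, hk⟩ := Int.ModEq.dvd h.symm
  have : a = b + q * k := by linarith
  rw [this, ec_add, ec_int_mul, mul_one]

lemma ec_cancel (d m : ℕ) (h : 0 < d) (x : ℤ) : ec (d * m) (d * x) = ec m x := by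
  rcases Nat.eq_zero_or_pos m with h' | h'
  · subst h'; simp [ec]
  have hd : (d : ℂ) ≠ 0 := by exact_mod_cast h.ne'
  have hm : (m : ℂ) ≠ 0 := by exact_mod_cast h'.ne'
  unfold ec
  congr 1
  push_cast
  field_simp

lemma sum_range_zmod (n : ℕ) [NeZero n] (F : ℕ → ℂ) :
    ∑ u ∈ Finset.range n, F u = ∑ u : ZMod n, F u.val := by
  apply Finset.sum_nbij' (i := fun u => ((u : ℕ) : ZMod n)) (j := fun x => x.val)
  · intro a _; exact Finset.mem_univ _
  · intro a _; exact Finset.mem_range.2 (ZMod.val_lt a)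
  · intro a ha; simp [ZMod.val_natCast_of_lt (Finset.mem_range.1 ha)]
  · intro a _; exact ZMod.natCast_zmod_val a
  · intro a ha; rw [ZMod.val_natCast_of_lt (Finset.mem_range.1 ha)]

lemma crt_comp (d m : ℕ) [NeZero d] [NeZero m] (h : Nat.Coprime d m) (p : ZMod d × ZMod m) :
    ((((ZMod.chineseRemainder h).symm p).val : ℤ) ≡ (p.1.val : ℤ) [ZMOD (d:ℤ)]) ∧
    ((((ZMod.chineseRemainder h).symm p).val : ℤ) ≡ (p.2.val : ℤ) [ZMOD (m:ℤ)]) := by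
  set e := ZMod.chineseRemainder h
  set x := e.symm p with hx
  have h1 : e x = p := e.apply_symm_apply p
  have h2 : e ((x.val : ZMod (d * m))) = (((x.val : ℕ) : ZMod d), ((x.val : ℕ) : ZMod m)) := by
    rw [map_natCast e x.val]
    rfl
  rw [ZMod.natCast_zmod_val, h1] at h2
  constructor
  · have hp : p.1 = ((x.val : ℕ) : ZMod d) := by rw [h2]
    have hv : p.1.val = x.val % d := by rw [hp, ZMod.val_natCast]
    rw [Int.natCast_modEq_iff, hv]
    exact (Nat.mod_modEq _ _).symm
  · have hp : p.2 = ((x.val : ℕ) : ZMod m) := by rw [h2]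
    have hv : p.2.val = x.val % m := by rw [hp, ZMod.val_natCast]
    rw [Int.natCast_modEq_iff, hv]
    exact (Nat.mod_modEq _ _).symm

lemma crt_split (d m : ℕ) [NeZero d] [NeZero m] (h : Nat.Coprime d m)
    (f f₁ f₂ : ℤ → ℤ → ℂ)
    (hf : ∀ u v u₁ v₁ u₂ v₂ : ℤ, u ≡ u₁ [ZMOD (d:ℤ)] → v ≡ v₁ [ZMOD (d:ℤ)] →
        u ≡ u₂ [ZMOD (m:ℤ)] → v ≡ v₂ [ZMOD (m:ℤ)] → f u v = f₁ u₁ v₁ * f₂ u₂ v₂) :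
    ∑ u ∈ Finset.range (d * m), ∑ v ∈ Finset.range (d * m), f u v
      = (∑ u ∈ Finset.range d, ∑ v ∈ Finset.range d, f₁ u v) *
        (∑ u ∈ Finset.range m, ∑ v ∈ Finset.range m, f₂ u v) := by
  have e := ZMod.chineseRemainder h
  calc
    ∑ u ∈ Finset.range (d * m), ∑ v ∈ Finset.range (d * m), f u v
        = ∑ u : ZMod (d * m), ∑ v : ZMod (d * m), f u.val v.val := by
          rw [sum_range_zmod (d*m) (fun u => ∑ v ∈ Finset.range (d*m), f u v)]
          exact Finset.sum_congr rfl fun u _ => sum_range_zmod (d*m) (fun v => f u.val v)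
    _ = ∑ p : ZMod d × ZMod m, ∑ r : ZMod d × ZMod m,
          f ((ZMod.chineseRemainder h).symm p).val ((ZMod.chineseRemainder h).symm r).val := by
          refine (Fintype.sum_equiv (ZMod.chineseRemainder h).toEquiv.symm _ _ fun p => ?_).symm
          exact Fintype.sum_equiv (ZMod.chineseRemainder h).toEquiv.symm _ _ fun r => rfl
    _ = ∑ p : ZMod d × ZMod m, ∑ r : ZMod d × ZMod m,
          f₁ p.1.val r.1.val * f₂ p.2.val r.2.val := by
          apply Finset.sum_congr rfl; intro p _
          apply Finset.sum_congr rfl; intro r _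
          exact hf _ _ _ _ _ _ (crt_comp d m h p).1 (crt_comp d m h r).1
            (crt_comp d m h p).2 (crt_comp d m h r).2
    _ = (∑ u : ZMod d, ∑ v : ZMod d, f₁ u.val v.val) *
        (∑ u : ZMod m, ∑ v : ZMod m, f₂ u.val v.val) := by
          simp_rw [Fintype.sum_prod_type, Finset.sum_mul_sum]
    _ = (∑ u ∈ Finset.range d, ∑ v ∈ Finset.range d, f₁ u v) *
        (∑ u ∈ Finset.range m, ∑ v ∈ Finset.range m, f₂ u v) := by
          congr 1
          · rw [sum_range_zmod d (fun u => ∑ v ∈ Finset.range d, f₁ u v)]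
            exact Finset.sum_congr rfl fun u _ => (sum_range_zmod d (fun v => f₁ u.val v)).symm
          · rw [sum_range_zmod m (fun u => ∑ v ∈ Finset.range m, f₂ u v)]
            exact Finset.sum_congr rfl fun u _ => (sum_range_zmod m (fun v => f₂ u.val v)).symm

lemma jacobi_congr {a b : ℤ} {n : ℕ} (h : a ≡ b [ZMOD (n:ℤ)]) :
    jacobiSym a n = jacobiSym b n := jacobiSym.mod_left' h

lemma gcd_dvd_congr {x y : ℤ} {n : ℕ} (hxy : x ≡ y [ZMOD (n:ℤ)]) :
    Int.gcd x n ∣ Int.gcd y n := by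
  have d1 : (Int.gcd x n : ℤ) ∣ y := by
    have : (Int.gcd x n : ℤ) ∣ x + (y - x) :=
      dvd_add (Int.gcd_dvd_left _ _) (dvd_trans (Int.gcd_dvd_right _ _) (Int.ModEq.dvd hxy))
    simpa using this
  exact_mod_cast Int.dvd_gcd d1 (Int.gcd_dvd_right _ _)

lemma gcd_congr_left {a b : ℤ} {n : ℕ} (h : a ≡ b [ZMOD (n:ℤ)]) :
    Int.gcd a n = Int.gcd b n :=
  Nat.dvd_antisymm (gcd_dvd_congr h) (gcd_dvd_congr h.symm)

lemma dvd_congr_int {a b : ℤ} {n : ℕ} (h : a ≡ b [ZMOD (n:ℤ)]) :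
    (n:ℤ) ∣ a ↔ (n:ℤ) ∣ b := by
  rw [← Int.modEq_zero_iff_dvd, ← Int.modEq_zero_iff_dvd]
  exact ⟨fun h2 => h.symm.trans h2, fun h2 => h.trans h2⟩

lemma gcd_mul_eq_iff {d m : ℕ} (h : Nat.Coprime d m) (t : ℤ) :
    Int.gcd t (d * m : ℕ) = d ↔ ((d:ℤ) ∣ t ∧ Int.gcd t m = 1) := by
  have hdT : ((d:ℤ) ∣ t) ↔ d ∣ t.natAbs := by
    constructor
    · intro hh; exact Int.natCast_dvd_natCast.mp (Int.dvd_natAbs.mpr hh)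
    · intro hh
      have := Int.natCast_dvd_natCast.mpr hh
      exact this.trans (Int.natAbs_dvd.mpr dvd_rfl)
  have hg1 : Int.gcd t (d*m : ℕ) = Nat.gcd t.natAbs (d*m) := by
    unfold Int.gcd; simp [Int.natAbs_mul]
  have hg2 : Int.gcd t (m:ℕ) = Nat.gcd t.natAbs m := by
    unfold Int.gcd; simp
  rw [hg1, hg2, hdT]
  set T := t.natAbs
  constructor
  · intro hgcd
    refine ⟨hgcd ▸ Nat.gcd_dvd_left T (d*m), ?_⟩
    have h1 : Nat.gcd T m ∣ d := hgcd ▸ Nat.dvd_gcd (Nat.gcd_dvd_left T m)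
      (dvd_mul_of_dvd_right (Nat.gcd_dvd_right T m) d)
    have h2 : Nat.gcd T m ∣ m := Nat.gcd_dvd_right T m
    exact Nat.eq_one_of_dvd_one (h ▸ Nat.dvd_gcd h1 h2)
  · rintro ⟨h1, h2⟩
    apply Nat.dvd_antisymm
    · have hcop : Nat.Coprime (Nat.gcd T (d*m)) m :=
        Nat.Coprime.coprime_dvd_left (Nat.gcd_dvd_left T (d*m)) h2
      exact Nat.Coprime.dvd_of_dvd_mul_right hcop (Nat.gcd_dvd_right T (d*m))
    · exact Nat.dvd_gcd h1 (dvd_mul_of_dvd_left dvd_rfl m)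

noncomputable def Ad (d : ℕ) : ℂ :=
  ∑ u ∈ Finset.range d, ∑ v ∈ Finset.range d,
    if ((d:ℤ) ∣ ((u:ℤ) * v - 1)) then
      ((jacobiSym ((u : ℤ) * v * ((u : ℤ) + 1) * ((v : ℤ) + 1)) d : ℤ) : ℂ) else 0

lemma Ad_one : Ad 1 = 1 := by
  simp [Ad, jacobiSym.one_right]

lemma Ad_prime (p : ℕ) (hp : p.Prime) (hp2 : p ≠ 2) :
    Ad p = -((jacobiSym (-1) p : ℤ) : ℂ) := by
  haveI : Fact p.Prime := ⟨hp⟩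
  haveI : NeZero p := ⟨hp.ne_zero⟩
  have hchar : ringChar (ZMod p) ≠ 2 := by rw [ZMod.ringChar_zmod_n]; exact hp2
  set χ := quadraticChar (ZMod p) with hχ
  -- convert to ZMod sums
  have step1 : Ad p = ∑ u : ZMod p, ∑ v : ZMod p,
      (if u * v = 1 then ((χ (u * v * (u+1) * (v+1)) : ℤ) : ℂ) else 0) := by
    rw [Ad, sum_range_zmod p (fun u => ∑ v ∈ Finset.range p, _)]
    apply Finset.sum_congr rfl; intro u _
    rw [sum_range_zmod p (fun v => _)]
    apply Finset.sum_congr rfl; intro v _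
    have hcond : ((p:ℤ) ∣ ((u.val:ℤ) * (v.val:ℤ) - 1)) ↔ u * v = 1 := by
      rw [← ZMod.intCast_zmod_eq_zero_iff_dvd]
      push_cast
      rw [ZMod.natCast_zmod_val, ZMod.natCast_zmod_val, sub_eq_zero]
    have hval : (jacobiSym ((u.val : ℤ) * (v.val:ℤ) * ((u.val : ℤ) + 1) * ((v.val : ℤ) + 1)) p : ℤ)
        = χ (u * v * (u+1) * (v+1)) := by
      rw [← jacobiSym.legendreSym.to_jacobiSym]
      unfold legendreSym
      congr 1
      push_cast
      rw [ZMod.natCast_zmod_val, ZMod.natCast_zmod_val]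
    simp only [hcond]
    rw [hval]
  rw [step1]
  -- evaluate inner sums
  have inner : ∀ u : ZMod p, (∑ v : ZMod p,
      (if u * v = 1 then ((χ (u * v * (u+1) * (v+1)) : ℤ) : ℂ) else 0))
      = ((χ u : ℤ) : ℂ) * ((χ (u+1) : ℤ) : ℂ)^2 := by
    intro u
    by_cases hu : u = 0
    · subst hu
      simp only [zero_mul, zero_ne_one, if_false, Finset.sum_const_zero,
        show χ (0 : ZMod p) = 0 from quadraticChar_zero, Int.cast_zero, zero_mul]
    · have hiff : ∀ v : ZMod p, (u * v = 1) ↔ (v = u⁻¹) := by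
        intro v
        constructor
        · intro hh; exact eq_inv_of_mul_eq_one_left (by rwa [mul_comm] at hh)
        · rintro rfl; exact mul_inv_cancel₀ hu
      simp_rw [hiff]
      rw [Finset.sum_ite_eq' Finset.univ (u⁻¹ : ZMod p)
        (fun v => ((χ (u * v * (u+1) * (v+1)) : ℤ) : ℂ))]
      simp only [Finset.mem_univ, if_true]
      have hmu : u * u⁻¹ = 1 := mul_inv_cancel₀ hu
      have harg : u * u⁻¹ * (u+1) * (u⁻¹+1) = u⁻¹ * ((u+1) * (u+1)) := by
        linear_combination (u+1) * u⁻¹ * hmu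
      rw [harg]
      have hinv : χ u⁻¹ = χ u := by
        have h1 : χ u⁻¹ * χ u = 1 := by
          rw [← map_mul, inv_mul_cancel₀ hu, map_one]
        rcases quadraticChar_dichotomy hu with h2 | h2 <;>
          rcases quadraticChar_dichotomy (inv_ne_zero hu) with h3 | h3 <;>
          rw [h3, h2] at h1 ⊢ <;> norm_num at h1
      rw [map_mul, map_mul, hinv]
      push_cast
      ring
  simp_rw [inner]
  have split : ∀ u : ZMod p, ((χ u : ℤ) : ℂ) * ((χ (u+1) : ℤ) : ℂ)^2
      = ((χ u : ℤ) : ℂ) - (if u = -1 then ((χ (-1 : ZMod p) : ℤ) : ℂ) else 0) := by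
    intro u
    by_cases hu : u = -1
    · subst hu
      have h0 : (-1 : ZMod p) + 1 = 0 := by ring
      rw [h0, if_pos rfl, show χ (0:ZMod p) = 0 from quadraticChar_zero, sub_self]
      norm_num
    · have h1 : u + 1 ≠ 0 := fun hh => hu (by linear_combination (norm := ring_nf) hh)
      have h2 : (χ (u+1))^2 = 1 := quadraticChar_sq_one h1
      rw [if_neg hu, sub_zero, ← Int.cast_pow, h2]
      simp
  simp_rw [split, Finset.sum_sub_distrib]
  rw [Finset.sum_ite_eq' Finset.univ (-1 : ZMod p) (fun _ => ((χ (-1:ZMod p) : ℤ) : ℂ))]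
  simp only [Finset.mem_univ, if_true]
  have hzero : (∑ u : ZMod p, ((χ u : ℤ) : ℂ)) = 0 := by
    rw [← Int.cast_sum]
    rw [show (∑ u : ZMod p, (χ u : ℤ)) = 0 by exact_mod_cast quadraticChar_sum_zero hchar]
    simp
  rw [hzero, zero_sub]
  congr 1
  have : jacobiSym (-1) p = χ (-1 : ZMod p) := by
    rw [← jacobiSym.legendreSym.to_jacobiSym]
    unfold legendreSym
    rw [hχ]
    congr 1
    push_cast
    ring
  rw [this]

lemma Ad_mul (d m : ℕ) [NeZero d] [NeZero m] (h : Nat.Coprime d m) :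
    Ad (d * m) = Ad d * Ad m := by
  have hd0 : d ≠ 0 := NeZero.ne d
  have hm0 : m ≠ 0 := NeZero.ne m
  refine crt_split d m h
    (fun x y => if (((d*m : ℕ):ℤ) ∣ (x * y - 1)) then
      ((jacobiSym (x * y * (x + 1) * (y + 1)) (d*m) : ℤ) : ℂ) else 0)
    (fun x y => if ((d:ℤ) ∣ (x * y - 1)) then
      ((jacobiSym (x * y * (x + 1) * (y + 1)) d : ℤ) : ℂ) else 0)
    (fun x y => if ((m:ℤ) ∣ (x * y - 1)) then
      ((jacobiSym (x * y * (x + 1) * (y + 1)) m : ℤ) : ℂ) else 0)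
    ?_
  intro u v u₁ v₁ u₂ v₂ h1 h2 h3 h4
  have td : u * v - 1 ≡ u₁ * v₁ - 1 [ZMOD (d:ℤ)] := (h1.mul h2).sub_right 1
  have tm : u * v - 1 ≡ u₂ * v₂ - 1 [ZMOD (m:ℤ)] := (h3.mul h4).sub_right 1
  have Xd : u * v * (u+1) * (v+1) ≡ u₁ * v₁ * (u₁+1) * (v₁+1) [ZMOD (d:ℤ)] :=
    ((h1.mul h2).mul (h1.add_right 1)).mul (h2.add_right 1)
  have Xm : u * v * (u+1) * (v+1) ≡ u₂ * v₂ * (u₂+1) * (v₂+1) [ZMOD (m:ℤ)] :=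
    ((h3.mul h4).mul (h3.add_right 1)).mul (h4.add_right 1)
  have hco : IsCoprime (d:ℤ) (m:ℤ) := Nat.isCoprime_iff_coprime.mpr h
  have hcond : (((d*m : ℕ):ℤ) ∣ (u*v - 1)) ↔
      (((d:ℤ) ∣ (u₁*v₁ - 1)) ∧ ((m:ℤ) ∣ (u₂*v₂ - 1))) := by
    rw [← dvd_congr_int td, ← dvd_congr_int tm]
    push_cast
    constructor
    · intro hh
      exact ⟨(dvd_mul_right (d:ℤ) m).trans hh, (dvd_mul_left (m:ℤ) d).trans hh⟩
    · rintro ⟨ha, hb⟩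
      exact hco.mul_dvd ha hb
  by_cases hc : ((d:ℤ) ∣ (u₁*v₁ - 1)) ∧ ((m:ℤ) ∣ (u₂*v₂ - 1))
  · rw [if_pos (hcond.mpr hc), if_pos hc.1, if_pos hc.2]
    have hsplit : jacobiSym (u * v * (u+1) * (v+1)) (d*m)
        = jacobiSym (u₁ * v₁ * (u₁+1) * (v₁+1)) d * jacobiSym (u₂ * v₂ * (u₂+1) * (v₂+1)) m := by
      rw [jacobiSym.mul_right' _ hd0 hm0, jacobi_congr Xd, jacobi_congr Xm]
    push_cast [hsplit]
    ring
  · rw [if_neg (fun hh => hc (hcond.mp hh))]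
    rcases not_and_or.mp hc with hcc | hcc
    · rw [if_neg hcc, zero_mul]
    · rw [if_neg hcc, mul_zero]

lemma Ad_formula : ∀ (d : ℕ), 0 < d → Odd d → Squarefree d →
    Ad d = ((ArithmeticFunction.moebius d : ℤ) : ℂ) * ((jacobiSym (-1) d : ℤ) : ℂ) := by
  intro d
  induction d using Nat.strong_induction_on with
  | _ d ih =>
    intro hd hodd hsf
    by_cases h1 : d = 1
    · subst h1
      simp [Ad_one]
    · set p := d.minFac with hpdef
      have hp : p.Prime := Nat.minFac_prime h1
      have hpd : p ∣ d := Nat.minFac_dvd d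
      set m := d / p with hmdef
      have hdm : p * m = d := Nat.mul_div_cancel' hpd
      have hm0 : 0 < m := Nat.div_pos (Nat.minFac_le hd) hp.pos
      have hmd : m < d := by
        have := hp.two_le
        calc m = d / p := rfl
        _ ≤ d / 2 := Nat.div_le_div_left this (by norm_num)
        _ < d := Nat.div_lt_self hd (by norm_num)
      have hpm : ¬ p ∣ m := by
        intro hdvd
        have : p * p ∣ d := by
          rw [← hdm]
          exact mul_dvd_mul_left p hdvd
        exact hp.one_lt.ne' (Nat.isUnit_iff.mp (hsf p this))
      have hcop : Nat.Coprime p m := (Nat.Prime.coprime_iff_not_dvd hp).mpr hpm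
      have hmodd : Odd m := by
        rw [← hdm, Nat.odd_mul] at hodd
        exact hodd.2
      have hpodd : p ≠ 2 := by
        rw [← hdm, Nat.odd_mul] at hodd
        intro hh
        rw [hh] at hodd
        exact (by norm_num : ¬ Odd 2) hodd.1
      have hmsf : Squarefree m := hsf.squarefree_of_dvd ⟨p, by rw [← hdm, mul_comm]⟩
      haveI : NeZero p := ⟨hp.ne_zero⟩
      haveI : NeZero m := ⟨hm0.ne'⟩
      have heq : Ad d = Ad p * Ad m := by
        rw [← hdm]
        exact Ad_mul p m hcop
      rw [heq, Ad_prime p hp hpodd, ih m hmd hm0 hmodd hmsf]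
      have hmoeb : ArithmeticFunction.moebius d
          = ArithmeticFunction.moebius p * ArithmeticFunction.moebius m := by
        rw [← hdm]
        exact (ArithmeticFunction.isMultiplicative_moebius).map_mul_of_coprime hcop
      have hjac : jacobiSym (-1) d = jacobiSym (-1) p * jacobiSym (-1) m := by
        rw [← hdm]
        exact jacobiSym.mul_right' _ hp.ne_zero hm0.ne'
      rw [hmoeb, hjac, ArithmeticFunction.moebius_apply_prime hp]
      push_cast
      ring

lemma stratum (d m : ℕ) [NeZero d] [NeZero m] (cop : Nat.Coprime d m) (w winv : ℤ)
    (hwinv : ((m:ℕ) : ℤ) ∣ (winv * d - 1)) :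
    (∑ u ∈ Finset.range (d*m), ∑ v ∈ Finset.range (d*m),
      if Int.gcd ((u:ℤ) * v - 1) ((d*m : ℕ) : ℤ) = d then
        (jacobiSym ((u:ℤ) * v * ((u:ℤ) + 1) * ((v:ℤ) + 1)) (d*m) : ℂ) *
          ec (d*m) (((u:ℤ) * v - 1) * w)
      else 0)
    = Ad d * Hstar (winv * w) m := by
  have hd0 : d ≠ 0 := NeZero.ne d
  have hm0 : m ≠ 0 := NeZero.ne m
  rw [Hstar, Ad]
  refine crt_split d m cop
    (fun x y => if Int.gcd (x * y - 1) ((d*m : ℕ) : ℤ) = d then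
        ((jacobiSym (x * y * (x + 1) * (y + 1)) (d*m) : ℤ) : ℂ) * ec (d*m) ((x * y - 1) * w)
      else 0)
    (fun x y => if ((d:ℤ) ∣ (x * y - 1)) then
      ((jacobiSym (x * y * (x + 1) * (y + 1)) d : ℤ) : ℂ) else 0)
    (fun x y => if Int.gcd (x * y - 1) (m : ℤ) = 1 then
      ((jacobiSym (x * y * (x + 1) * (y + 1)) m : ℤ) : ℂ) * ec m ((x * y - 1) * (winv * w))
      else 0)
    ?_
  intro u v u₁ v₁ u₂ v₂ h1 h2 h3 h4
  have td : u * v - 1 ≡ u₁ * v₁ - 1 [ZMOD (d:ℤ)] := (h1.mul h2).sub_right 1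
  have tm : u * v - 1 ≡ u₂ * v₂ - 1 [ZMOD (m:ℤ)] := (h3.mul h4).sub_right 1
  have Xd : u * v * (u+1) * (v+1) ≡ u₁ * v₁ * (u₁+1) * (v₁+1) [ZMOD (d:ℤ)] :=
    ((h1.mul h2).mul (h1.add_right 1)).mul (h2.add_right 1)
  have Xm : u * v * (u+1) * (v+1) ≡ u₂ * v₂ * (u₂+1) * (v₂+1) [ZMOD (m:ℤ)] :=
    ((h3.mul h4).mul (h3.add_right 1)).mul (h4.add_right 1)
  have hcond : (Int.gcd (u * v - 1) ((d*m : ℕ) : ℤ) = d) ↔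
      (((d:ℤ) ∣ (u₁ * v₁ - 1)) ∧ Int.gcd (u₂ * v₂ - 1) (m:ℤ) = 1) := by
    rw [gcd_mul_eq_iff cop, dvd_congr_int td, gcd_congr_left tm]
  by_cases hc : ((d:ℤ) ∣ (u₁ * v₁ - 1)) ∧ Int.gcd (u₂ * v₂ - 1) (m:ℤ) = 1
  · rw [if_pos (hcond.mpr hc), if_pos hc.1, if_pos hc.2]
    have hsplit : jacobiSym (u * v * (u+1) * (v+1)) (d*m)
        = jacobiSym (u₁ * v₁ * (u₁+1) * (v₁+1)) d * jacobiSym (u₂ * v₂ * (u₂+1) * (v₂+1)) m := by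
      rw [jacobiSym.mul_right' _ hd0 hm0, jacobi_congr Xd, jacobi_congr Xm]
    obtain ⟨s, hs⟩ : (d:ℤ) ∣ (u * v - 1) := (dvd_congr_int td).mpr hc.1
    have hec : ec (d*m) ((u * v - 1) * w) = ec m ((u₂ * v₂ - 1) * (winv * w)) := by
      have e1 : ec (d*m) ((u * v - 1) * w) = ec m (s * w) := by
        rw [show (u * v - 1) * w = (d:ℤ) * (s * w) by rw [hs]; ring]
        exact ec_cancel d m (Nat.pos_of_ne_zero hd0) (s * w)
      have h5 : winv * (d:ℤ) ≡ 1 [ZMOD (m:ℤ)] := by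
        rw [Int.modEq_iff_dvd, show (1 : ℤ) - winv * (d:ℤ) = -(winv * (d:ℤ) - 1) by ring]
        exact dvd_neg.mpr hwinv
      have e2 : (u₂ * v₂ - 1) * (winv * w) ≡ s * w [ZMOD (m:ℤ)] := by
        calc (u₂ * v₂ - 1) * (winv * w) ≡ (u * v - 1) * (winv * w) [ZMOD (m:ℤ)] :=
              tm.symm.mul_right _
          _ = (s * w) * (winv * (d:ℤ)) := by rw [hs]; ring
          _ ≡ (s * w) * 1 [ZMOD (m:ℤ)] := h5.mul_left _
          _ = s * w := by ring
      rw [e1, ec_congr e2]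
    rw [hec, hsplit]
    push_cast
    ring
  · rw [if_neg (fun hh => hc (hcond.mp hh))]
    rcases not_and_or.mp hc with hcc | hcc
    · rw [if_neg hcc, zero_mul]
    · rw [if_neg hcc, mul_zero]

/-- for `q > 1` odd squarefree and any integer `w`,
`H(w; q) = Σ_{q₁ q₂ = q} μ(q₁) χ_{q₁}(−1) H*(q̄₁ w; q₂)`. -/
theorem Hw_eq_sum_Hstar (q : ℕ) (hq : 1 < q) (hodd : Odd q) (hsf : Squarefree q) (w : ℤ)
    (inv : ℕ → ℤ) (hinv : ∀ d ∈ q.divisors, ((q / d : ℕ) : ℤ) ∣ (inv d * d - 1)) :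
    Hw w q = ∑ d ∈ q.divisors,
      (ArithmeticFunction.moebius d : ℂ) * (jacobiSym (-1) d : ℂ) * Hstar (inv d * w) (q / d) := by
  have hq0 : 0 < q := by omega
  -- stratification
  have stratify : Hw w q = ∑ d ∈ q.divisors, ∑ u ∈ Finset.range q, ∑ v ∈ Finset.range q,
      if Int.gcd ((u:ℤ) * v - 1) (q : ℤ) = d then
        (jacobiSym ((u:ℤ) * v * ((u:ℤ) + 1) * ((v:ℤ) + 1)) q : ℂ) *
          ec q (((u:ℤ) * v - 1) * w)
      else 0 := by
    rw [Hw]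
    have hterm : ∀ u v : ℕ,
        (jacobiSym ((u:ℤ) * v * ((u:ℤ) + 1) * ((v:ℤ) + 1)) q : ℂ) *
          ec q (((u:ℤ) * v - 1) * w)
        = ∑ d ∈ q.divisors, if Int.gcd ((u:ℤ) * v - 1) (q : ℤ) = d then
            (jacobiSym ((u:ℤ) * v * ((u:ℤ) + 1) * ((v:ℤ) + 1)) q : ℂ) *
              ec q (((u:ℤ) * v - 1) * w) else 0 := by
      intro u v
      rw [Finset.sum_ite_eq q.divisors (Int.gcd ((u:ℤ) * v - 1) (q : ℤ))]
      rw [if_pos (Nat.mem_divisors.mpr ⟨Int.natCast_dvd_natCast.mp (Int.gcd_dvd_right _ _), hq0.ne'⟩)]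
    calc ∑ u ∈ Finset.range q, ∑ v ∈ Finset.range q,
          (jacobiSym ((u:ℤ) * v * ((u:ℤ) + 1) * ((v:ℤ) + 1)) q : ℂ) *
            ec q (((u:ℤ) * v - 1) * w)
        = ∑ u ∈ Finset.range q, ∑ v ∈ Finset.range q, ∑ d ∈ q.divisors,
            (if Int.gcd ((u:ℤ) * v - 1) (q : ℤ) = d then
              (jacobiSym ((u:ℤ) * v * ((u:ℤ) + 1) * ((v:ℤ) + 1)) q : ℂ) *
                ec q (((u:ℤ) * v - 1) * w) else 0) :=
          Finset.sum_congr rfl fun u _ => Finset.sum_congr rfl fun v _ => hterm u v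
      _ = ∑ u ∈ Finset.range q, ∑ d ∈ q.divisors, ∑ v ∈ Finset.range q, _ :=
          Finset.sum_congr rfl fun u _ => Finset.sum_comm
      _ = ∑ d ∈ q.divisors, ∑ u ∈ Finset.range q, ∑ v ∈ Finset.range q, _ := Finset.sum_comm
  rw [stratify]
  apply Finset.sum_congr rfl
  intro d hd
  obtain ⟨hdvd, -⟩ := Nat.mem_divisors.mp hd
  have hd0 : 0 < d := Nat.pos_of_mem_divisors hd
  set m := q / d with hm
  have hdm : d * m = q := Nat.mul_div_cancel' hdvd
  have hm0 : 0 < m := by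
    rcases Nat.eq_zero_or_pos m with h | h
    · rw [h, mul_zero] at hdm; omega
    · exact h
  have cop : Nat.Coprime d m := by
    have hsq : Nat.gcd d m * Nat.gcd d m ∣ q := by
      rw [← hdm]
      exact mul_dvd_mul (Nat.gcd_dvd_left d m) (Nat.gcd_dvd_right d m)
    exact Nat.isUnit_iff.mp (hsf _ hsq)
  have hodd' : Odd d := by
    rcases hodd with ⟨k, hk⟩
    rcases Nat.even_or_odd d with he | ho
    · exfalso
      obtain ⟨t, ht⟩ := he
      obtain ⟨c, hc⟩ := hdvd
      have : q = 2 * (t * c) := by rw [hc, ht]; ring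
      omega
    · exact ho
  have hsf' : Squarefree d := hsf.squarefree_of_dvd hdvd
  haveI : NeZero d := ⟨hd0.ne'⟩
  haveI : NeZero m := ⟨hm0.ne'⟩
  have hwinv : ((m:ℕ) : ℤ) ∣ (inv d * d - 1) := hinv d hd
  rw [← hdm]
  rw [stratum d m cop w (inv d) hwinv]
  rw [Ad_formula d hd0 hodd' hsf']
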